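/- Fix a finite node set V with weights w_{ij} > 0, a target node n, and a connection weight w > 0. For S ⊆ V, define transition probabilities p_{ik}(S) on V ∪ {n}: for i ∈ S, p_{in}(S) = w/(w + d_i) and p_{ik}(S) = w_{ik}/(w + d_i) for k ≠ n, where d_i = Σ_j w_{ij}; for i ∉ S, p_{ik}(S) = w_{ik}/d_i and p_{in}(S) = 0. Define the truncated hitting time h_i^T(S) via the recursion h_n^t = 0, h_i^0 = 0, h_i^t(S) = 1 + Σ_k p_{ik}(S) h_k^{t-1}(S). Then for every i and T, S ↦ h_i^T(S) is non-increasing: S₁ ⊆ S₂ implies h_i^T(S₁) ≥ h_i^T(S₂). -/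

import Mathlib

open Finset

variable {V : Type*}

/-- Edge-addition transition kernel on `Option V`, where `none` is the target node `n`.
For `i ∈ S`, node `i` gets an extra edge of weight `wc` to the target. -/
noncomputable def ker [Fintype V] [DecidableEq V] (w : V → V → ℝ) (wc : ℝ) (S : Finset V) :
    Option V → Option V → ℝ
  | some i, some k => if i ∈ S then w i k / (wc + ∑ j, w i j) else w i k / (∑ j, w i j)
  | some i, none => if i ∈ S then wc / (wc + ∑ j, w i j) else 0
  | none, none => 1
  | none, some _ => 0

/-- Truncated absorbing probability of the target (`none`) under the edge-addition model. -/
noncomputable def AP [Fintype V] [DecidableEq V] (w : V → V → ℝ) (wc : ℝ) (S : Finset V) :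
    ℕ → Option V → ℝ
  | 0, x => if x = none then 1 else 0
  | _ + 1, none => 1
  | t + 1, some i => ∑ k, ker w wc S (some i) k * AP w wc S t k

/-- Truncated hitting time of the target (`none`) under the edge-addition model. -/
noncomputable def HT [Fintype V] [DecidableEq V] (w : V → V → ℝ) (wc : ℝ) (S : Finset V) :
    ℕ → Option V → ℝ
  | 0, _ => 0
  | _ + 1, none => 0
  | t + 1, some i => 1 + ∑ k, ker w wc S (some i) k * HT w wc S t k


lemma ker_nonneg [Fintype V] [DecidableEq V] (w : V → V → ℝ) (wc : ℝ)
    (hw : ∀ i j, 0 < w i j) (hwc : 0 < wc) (hd : ∀ i, 0 < ∑ j, w i j)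
    (S : Finset V) (x y : Option V) : 0 ≤ ker w wc S x y := by
  cases x with
  | none => cases y <;> simp [ker]
  | some i =>
    cases y with
    | none =>
      simp only [ker]
      have := hd i
      split
      · positivity
      · exact le_refl 0
    | some k =>
      simp only [ker]
      have := hw i k; have := hd i
      split <;> positivity

lemma HT_nonneg [Fintype V] [DecidableEq V] (w : V → V → ℝ) (wc : ℝ)
    (hw : ∀ i j, 0 < w i j) (hwc : 0 < wc) (hd : ∀ i, 0 < ∑ j, w i j)
    (S : Finset V) : ∀ (T : ℕ) (x : Option V), 0 ≤ HT w wc S T x := by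
  intro T
  induction T with
  | zero => intro x; simp [HT]
  | succ t ih =>
    intro x
    cases x with
    | none => simp [HT]
    | some i =>
      show (0:ℝ) ≤ 1 + ∑ k, ker w wc S (some i) k * HT w wc S t k
      have : (0:ℝ) ≤ ∑ k, ker w wc S (some i) k * HT w wc S t k :=
        Finset.sum_nonneg fun k _ =>
          mul_nonneg (ker_nonneg w wc hw hwc hd S _ k) (ih k)
      linarith

lemma HT_none [Fintype V] [DecidableEq V] (w : V → V → ℝ) (wc : ℝ)
    (S : Finset V) (T : ℕ) : HT w wc S T none = 0 := by
  cases T <;> simp [HT]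

/-- The truncated hitting time is non-increasing in the set of connection sources. -/
theorem HT_antitone_in_S [Fintype V] [DecidableEq V] (w : V → V → ℝ) (wc : ℝ)
    (hw : ∀ i j, 0 < w i j) (hwc : 0 < wc) (hd : ∀ i, 0 < ∑ j, w i j)
    (S₁ S₂ : Finset V) (hS : S₁ ⊆ S₂) :
    ∀ (T : ℕ) (x : Option V), HT w wc S₂ T x ≤ HT w wc S₁ T x := by
  intro T
  induction T with
  | zero => intro x; simp [HT]
  | succ t ih =>
    intro x
    cases x with
    | none => simp [HT]
    | some i =>
      show 1 + ∑ k, ker w wc S₂ (some i) k * HT w wc S₂ t k ≤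
        1 + ∑ k, ker w wc S₁ (some i) k * HT w wc S₁ t k
      have key : ∀ k : Option V,
          ker w wc S₂ (some i) k * HT w wc S₂ t k ≤
          ker w wc S₁ (some i) k * HT w wc S₁ t k := by
        intro k
        cases k with
        | none => simp [HT_none]
        | some k =>
          have h1 : ker w wc S₂ (some i) (some k) * HT w wc S₂ t (some k) ≤
              ker w wc S₂ (some i) (some k) * HT w wc S₁ t (some k) :=
            mul_le_mul_of_nonneg_left (ih (some k))
              (ker_nonneg w wc hw hwc hd S₂ _ _)
          refine h1.trans (mul_le_mul_of_nonneg_right ?_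
            (HT_nonneg w wc hw hwc hd S₁ t (some k)))
          simp only [ker]
          by_cases h1 : i ∈ S₁
          · simp [h1, hS h1]
          · by_cases h2 : i ∈ S₂
            · simp only [h1, h2, if_true, if_false]
              apply div_le_div_of_nonneg_left (hw i k).le (hd i)
              linarith [hd i]
            · simp [h1, h2]
      exact add_le_add_right (Finset.sum_le_sum fun k _ => key k) 1
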